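/- Let M be the cycle matroid of a graph G that contains a loop e. Then for any T ⊆ E(M) with |T| = 2, the splitting matroid M_T either is graphic or contains a loop. Specifically: if e ∉ T then e remains a loop of M_T; if e ∈ T, say T = {e, f}, then M_T ≅ M(G') where G' is obtained from G by an explicit graph modification, hence M_T is graphic. -/

import Mathlib

set_option maxHeartbeats 1000000


open scoped Classical

namespace PaperSplit

variable {α β : Type}

/-- `A` is a matrix representation (columns indexed by `α`, rows by `η`) of the
matroid `M` over `GF(2)`, with ground set `E`. -/
def RepresentsOn {η : Type} (A : α → η → ZMod 2) (E : Set α) (M : Matroid α) : Prop :=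
  M.E = E ∧ ∀ I ⊆ E, (M.Indep I ↔ LinearIndependent (ZMod 2) (fun i : I => A i.1))

/-- The columns of the matrix `A_T`: one extra row (indexed by `none`) is appended,
with entry `1` exactly in the columns of `T`. -/
noncomputable def splitCols {η : Type} (A : α → η → ZMod 2) (T : Set α) :
    α → Option η → ZMod 2 :=
  fun a o => Option.elim o (if a ∈ T then 1 else 0) (A a)

/-- `MT` is the splitting matroid of `M` with respect to `T`. -/
def IsSplitting (M : Matroid α) (T : Set α) (MT : Matroid α) : Prop :=
  ∃ (η : Type) (A : α → η → ZMod 2),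
    RepresentsOn A M.E M ∧ RepresentsOn (splitCols A T) M.E MT

/-- `M` is a binary matroid. -/
def IsBinary (M : Matroid α) : Prop :=
  ∃ (η : Type) (A : α → η → ZMod 2), RepresentsOn A M.E M

/-- Deletion of a set of elements. -/
def del (M : Matroid α) (D : Set α) : Matroid α := M.restrict (M.E \ D)

/-- Contraction of a set of elements. -/
def con (M : Matroid α) (C : Set α) : Matroid α := (del M.dual C).dual

/-- `N` is a minor of `M`. -/
def IsMinorOf (N M : Matroid α) : Prop := ∃ X Y, Disjoint X Y ∧ N = con (del M X) Y

/-- `C` is a circuit (minimal dependent set) of `M`. -/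
def circuit (M : Matroid α) (C : Set α) : Prop :=
  C ⊆ M.E ∧ ¬ M.Indep C ∧ ∀ D ⊂ C, M.Indep D

/-- `C` is a cocircuit of `M`, i.e. a circuit of the dual. -/
def cocircuit (M : Matroid α) (C : Set α) : Prop := circuit M.dual C

def isLoop (M : Matroid α) (e : α) : Prop := circuit M {e}

def isColoop (M : Matroid α) (e : α) : Prop := isLoop M.dual e

/-- Matroid isomorphism. -/
def MIso (M : Matroid α) (N : Matroid β) : Prop :=
  ∃ e : M.E ≃ N.E, ∀ I : Set M.E,
    M.Indep (Subtype.val '' I) ↔ N.Indep (Subtype.val '' (e '' I))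

/-- A graphic matroid: one represented over `GF(2)` by a vertex–edge incidence
matrix (each column is zero or the sum of two distinct standard basis vectors). -/
def IsGraphic (M : Matroid α) : Prop :=
  ∃ (V : Type) (A : α → V → ZMod 2), RepresentsOn A M.E M ∧
    ∀ a ∈ M.E, A a = 0 ∨ ∃ u v : V, u ≠ v ∧
      A a = fun w => (if w = u then (1 : ZMod 2) else 0) + (if w = v then 1 else 0)

def IsCographic (M : Matroid α) : Prop := IsGraphic M.dual

/-- A multigraph with vertex type `V` and edge type `E`. -/
structure Multigraph (V E : Type) where
  ends : E → Sym2 V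

/-- The mod-2 vertex–edge incidence matrix of a multigraph. -/
noncomputable def Multigraph.inc {V E : Type} (G : Multigraph V E) : E → V → ZMod 2 :=
  fun e v => if G.ends e = Sym2.mk v v then 0 else if v ∈ G.ends e then 1 else 0

/-- `M` is the cycle matroid of the multigraph `G`. -/
def IsCycleMatroidOf {V E : Type} (G : Multigraph V E) (M : Matroid E) : Prop :=
  RepresentsOn G.inc Set.univ M

def Multigraph.Adj {V E : Type} (G : Multigraph V E) (u v : V) : Prop :=
  ∃ e, G.ends e = Sym2.mk u v

def Multigraph.Connected {V E : Type} (G : Multigraph V E) : Prop :=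
  Nonempty V ∧ ∀ u v : V, Relation.ReflTransGen G.Adj u v

noncomputable def Multigraph.degree {V E : Type} (G : Multigraph V E) (v : V) : ℕ :=
  Nat.card {e | v ∈ G.ends e ∧ ¬ (G.ends e).IsDiag} +
    2 * Nat.card {e | G.ends e = Sym2.mk v v}

def Multigraph.Eulerian {V E : Type} (G : Multigraph V E) : Prop :=
  G.Connected ∧ ∀ v, Even (G.degree v)

/-- The Fano matroid `F₇`: represented over `GF(2)` by the seven distinct
nonzero vectors of `GF(2)³`. -/
def IsFano (M : Matroid (Fin 7)) : Prop :=
  ∃ A : Fin 7 → Fin 3 → ZMod 2, RepresentsOn A Set.univ M ∧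
    Function.Injective A ∧ ∀ i, A i ≠ 0

/-- The complete graph `K₅` as a multigraph. -/
def K5 : Multigraph (Fin 5) {p : Sym2 (Fin 5) // ¬ p.IsDiag} := ⟨fun e => e.1⟩

/-- The complete bipartite graph `K₃,₃` as a multigraph. -/
def K33 : Multigraph (Fin 3 ⊕ Fin 3) (Fin 3 × Fin 3) :=
  ⟨fun e => Sym2.mk (Sum.inl e.1) (Sum.inr e.2)⟩


section Helpers


variable {E η V : Type}

lemma zmod2_add_self : ∀ b : ZMod 2, b + b = 0 := by decide

lemma combo_ind (T : Set E) {e f : E} (hef : e ≠ f) (hT : T = {e, f}) (l : E →₀ ZMod 2) :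
    Finsupp.linearCombination (ZMod 2)
      (fun a => if a ∈ T then (1 : ZMod 2) else 0) l = l e + l f := by
  rw [Finsupp.linearCombination_apply, Finsupp.sum]
  have hsplit : ∀ a : E, (if a ∈ T then (1 : ZMod 2) else 0)
      = (if a = e then 1 else 0) + (if a = f then 1 else 0) := by
    intro a
    subst hT
    by_cases h1 : a = e
    · subst h1; simp [hef]
    · by_cases h2 : a = f
      · subst h2; simp [h1]
      · simp [h1, h2]
  have key : ∀ c : E, (∑ i ∈ l.support, l i • (if i = c then (1 : ZMod 2) else 0)) = l c := by
    intro c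
    have h0 : ∀ i, l i • (if i = c then (1 : ZMod 2) else 0) = if i = c then l i else 0 := by
      intro i; by_cases h : i = c <;> simp [h]
    rw [Finset.sum_congr rfl fun i _ => h0 i, Finset.sum_ite_eq' l.support c l]
    by_cases h : c ∈ l.support
    · simp [h]
    · simp [h, Finsupp.notMem_support_iff.mp h]
  calc (∑ i ∈ l.support, l i • (if i ∈ T then (1 : ZMod 2) else 0))
      = ∑ i ∈ l.support, (l i • (if i = e then (1 : ZMod 2) else 0)
          + l i • (if i = f then (1 : ZMod 2) else 0)) := by
        refine Finset.sum_congr rfl fun i _ => ?_; rw [hsplit i, smul_add]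
    _ = l e + l f := by rw [Finset.sum_add_distrib, key e, key f]

lemma combo_split_eq_zero (C : E → η → ZMod 2) (T : Set E) (l : E →₀ ZMod 2) :
    Finsupp.linearCombination (ZMod 2) (splitCols C T) l = 0 ↔
      Finsupp.linearCombination (ZMod 2) C l = 0 ∧
      Finsupp.linearCombination (ZMod 2) (fun a => if a ∈ T then (1 : ZMod 2) else 0) l = 0 := by
  classical
  set πs : (Option η → ZMod 2) →ₗ[ZMod 2] (η → ZMod 2) :=
    LinearMap.funLeft (ZMod 2) (ZMod 2) some with hπs
  set πn : (Option η → ZMod 2) →ₗ[ZMod 2] ZMod 2 :=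
    LinearMap.proj none with hπn
  have hs : ∀ m : E →₀ ZMod 2, πs (Finsupp.linearCombination (ZMod 2) (splitCols C T) m)
      = Finsupp.linearCombination (ZMod 2) C m := by
    intro m; rw [Finsupp.apply_linearCombination]; rfl
  have hn : ∀ m : E →₀ ZMod 2, πn (Finsupp.linearCombination (ZMod 2) (splitCols C T) m)
      = Finsupp.linearCombination (ZMod 2) (fun a => if a ∈ T then (1 : ZMod 2) else 0) m := by
    intro m; rw [Finsupp.apply_linearCombination]; rfl
  constructor
  · intro h
    refine ⟨?_, ?_⟩
    · rw [← hs l, h, map_zero]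
    · rw [← hn l, h, map_zero]
  · rintro ⟨h1, h2⟩
    funext o
    cases o with
    | none =>
      have := hn l
      rw [h2] at this
      exact this
    | some x =>
      have := hs l
      rw [h1] at this
      exact congrFun this x

lemma key_mem (C : E → η → ZMod 2) {e f : E} (hef : e ≠ f) (hCe : C e = 0)
    {I : Set E} (heI : e ∈ I) :
    (LinearIndependent (ZMod 2) fun i : I => splitCols C {e, f} i.1) ↔
      LinearIndependent (ZMod 2) fun i : (I \ {e} : Set E) => C i.1 := by
  classical
  have h1 : (LinearIndependent (ZMod 2) fun i : I => splitCols C {e, f} i.1) ↔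
      ∀ l ∈ Finsupp.supported (ZMod 2) (ZMod 2) I,
        Finsupp.linearCombination (ZMod 2) (splitCols C {e, f}) l = 0 → l = 0 := by
    exact (linearIndependent_comp_subtype_iff (R := ZMod 2) (M := Option η → ZMod 2)
      (v := splitCols C {e, f})).trans linearIndepOn_iff
  have h2 : (LinearIndependent (ZMod 2) fun i : (I \ {e} : Set E) => C i.1) ↔
      ∀ l ∈ Finsupp.supported (ZMod 2) (ZMod 2) (I \ {e} : Set E),
        Finsupp.linearCombination (ZMod 2) C l = 0 → l = 0 := by
    exact (linearIndependent_comp_subtype_iff (R := ZMod 2) (M := η → ZMod 2) (v := C)).trans linearIndepOn_iff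
  rw [h1, h2]
  constructor
  · intro h l hl hl0
    have hle : l e = 0 := by
      by_contra hne
      have hmem : e ∈ (I \ {e} : Set E) := (Finsupp.mem_supported (ZMod 2) l).mp hl
        (Finsupp.mem_support_iff.mpr hne)
      exact hmem.2 rfl
    set l' := l + Finsupp.single e (l f) with hl'def
    have hl'supp : l' ∈ Finsupp.supported (ZMod 2) (ZMod 2) I := by
      rw [Finsupp.mem_supported (ZMod 2)]
      intro a ha
      rcases Finset.mem_union.mp (Finsupp.support_add ha) with h' | h'
      · exact ((Finsupp.mem_supported (ZMod 2) l).mp hl h').1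
      · have h'' := Finsupp.support_single_subset h'
        rw [Finset.mem_singleton] at h''
        rw [h'']; exact heI
    have hcombo : Finsupp.linearCombination (ZMod 2) (splitCols C {e, f}) l' = 0 := by
      rw [combo_split_eq_zero]
      constructor
      · rw [hl'def, map_add, hl0, Finsupp.linearCombination_single, hCe, smul_zero, add_zero]
      · rw [combo_ind {e,f} hef rfl]
        have he' : l' e = l f := by
          rw [hl'def]; simp [hle]
        have hf' : l' f = l f := by
          rw [hl'def]; simp [Finsupp.single_eq_of_ne' hef]
        rw [he', hf', zmod2_add_self]
    have hl'0 := h l' hl'supp hcombo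
    ext a
    by_cases hae : a = e
    · rw [hae, hle]; rfl
    · have h'' := DFunLike.congr_fun hl'0 a
      rw [hl'def] at h''
      simpa [Finsupp.single_eq_of_ne' (fun h' : e = a => hae h'.symm)] using h''
  · intro h l hl hl0
    rw [combo_split_eq_zero] at hl0
    obtain ⟨hc1, hc2⟩ := hl0
    set m := l.erase e with hmdef
    have hmsupp : m ∈ Finsupp.supported (ZMod 2) (ZMod 2) (I \ {e} : Set E) := by
      rw [Finsupp.mem_supported (ZMod 2)]
      intro a ha
      rw [hmdef, Finsupp.support_erase, Finset.coe_erase] at ha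
      exact ⟨(Finsupp.mem_supported (ZMod 2) l).mp hl ha.1, by simpa using ha.2⟩
    have hcm : Finsupp.linearCombination (ZMod 2) C m = 0 := by
      have hsum : Finsupp.linearCombination (ZMod 2) C l
          = Finsupp.linearCombination (ZMod 2) C m + l e • C e := by
        conv_lhs => rw [← Finsupp.erase_add_single e l]
        rw [map_add, Finsupp.linearCombination_single]
      rw [hCe, smul_zero, add_zero] at hsum
      rw [← hsum, hc1]
    have hm0 := h m hmsupp hcm
    have hlf : l f = 0 := by
      have h'' := DFunLike.congr_fun hm0 f
      rwa [hmdef, Finsupp.erase_ne hef.symm] at h''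
    have hle : l e = 0 := by
      rw [combo_ind {e,f} hef rfl, hlf, add_zero] at hc2
      exact hc2
    ext a
    by_cases hae : a = e
    · rw [hae, hle]; rfl
    · have h'' := DFunLike.congr_fun hm0 a
      rwa [hmdef, Finsupp.erase_ne hae] at h''

lemma key_not_mem (C : E → η → ZMod 2) {e f : E} (hef : e ≠ f)
    {I : Set E} (heI : e ∉ I) :
    (LinearIndependent (ZMod 2) fun i : I => splitCols C {e, f} i.1) ↔
      LinearIndependent (ZMod 2) fun i : (I \ {f} : Set E) => C i.1 := by
  classical
  have h1 : (LinearIndependent (ZMod 2) fun i : I => splitCols C {e, f} i.1) ↔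
      ∀ l ∈ Finsupp.supported (ZMod 2) (ZMod 2) I,
        Finsupp.linearCombination (ZMod 2) (splitCols C {e, f}) l = 0 → l = 0 := by
    exact (linearIndependent_comp_subtype_iff (R := ZMod 2) (M := Option η → ZMod 2)
      (v := splitCols C {e, f})).trans linearIndepOn_iff
  have h2 : (LinearIndependent (ZMod 2) fun i : (I \ {f} : Set E) => C i.1) ↔
      ∀ l ∈ Finsupp.supported (ZMod 2) (ZMod 2) (I \ {f} : Set E),
        Finsupp.linearCombination (ZMod 2) C l = 0 → l = 0 := by
    exact (linearIndependent_comp_subtype_iff (R := ZMod 2) (M := η → ZMod 2) (v := C)).trans linearIndepOn_iff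
  rw [h1, h2]
  constructor
  · intro h l hl hl0
    have hsupp := (Finsupp.mem_supported (ZMod 2) l).mp hl
    refine h l (Finsupp.supported_mono Set.diff_subset hl) ?_
    rw [combo_split_eq_zero]
    refine ⟨hl0, ?_⟩
    rw [combo_ind {e,f} hef rfl]
    have hle : l e = 0 := by
      by_contra hne; exact heI (hsupp (Finsupp.mem_support_iff.mpr hne)).1
    have hlf : l f = 0 := by
      by_contra hne; exact (hsupp (Finsupp.mem_support_iff.mpr hne)).2 rfl
    rw [hle, hlf, add_zero]
  · intro h l hl hl0
    rw [combo_split_eq_zero] at hl0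
    obtain ⟨hc1, hc2⟩ := hl0
    have hsupp := (Finsupp.mem_supported (ZMod 2) l).mp hl
    have hle : l e = 0 := by
      by_contra hne; exact heI (hsupp (Finsupp.mem_support_iff.mpr hne))
    have hlf : l f = 0 := by rw [combo_ind {e,f} hef rfl, hle, zero_add] at hc2; exact hc2
    refine h l ?_ hc1
    rw [Finsupp.mem_supported (ZMod 2)]
    intro a ha
    refine ⟨hsupp ha, fun haf => ?_⟩
    rw [Set.mem_singleton_iff] at haf
    exact Finsupp.mem_support_iff.mp ha (by rw [haf]; exact hlf)

noncomputable def rowOp (u : V) : (Option V → ZMod 2) →ₗ[ZMod 2] (Option V → ZMod 2) where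
  toFun x := fun o => x o + if o = some u then x none else 0
  map_add' x y := by
    funext o; by_cases h : o = some u <;> simp [h] <;> ring
  map_smul' c x := by
    funext o; by_cases h : o = some u <;> simp [h, smul_eq_mul, mul_add]

lemma rowOp_apply (u : V) (x : Option V → ZMod 2) (o : Option V) :
    rowOp u x o = x o + if o = some u then x none else 0 := rfl

lemma rowOp_invol (u : V) (x : Option V → ZMod 2) : rowOp u (rowOp u x) = x := by
  funext o
  by_cases h : o = some u <;>
    simp [rowOp_apply, h, add_assoc, zmod2_add_self]


lemma rowOp_ker (u : V) : LinearMap.ker (rowOp u) = ⊥ := by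
  rw [LinearMap.ker_eq_bot]
  intro x y hxy
  rw [← rowOp_invol u x, hxy, rowOp_invol]

end Helpers

section IncLemmas
variable {V E : Type}

lemma inc_loop (G : Multigraph V E) {a : E} (h : (G.ends a).IsDiag) : G.inc a = 0 := by
  obtain ⟨w, hw⟩ : G.ends a ∈ Set.range Sym2.diag := by rw [Sym2.range_diag]; exact h
  have hw' : G.ends a = Sym2.mk w w := hw.symm
  funext x
  simp only [Multigraph.inc]
  by_cases hx : G.ends a = Sym2.mk x x
  · simp [hx]
  · rw [if_neg hx, if_neg, Pi.zero_apply]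
    intro hmem
    rw [hw'] at hmem
    rw [Sym2.mem_iff] at hmem
    rcases hmem with h1 | h1 <;> exact hx (by rw [hw', h1])

lemma inc_nonloop (G : Multigraph V E) {a : E} {x y : V}
    (h : G.ends a = Sym2.mk x y) (hxy : x ≠ y) :
    G.inc a = fun w => (if w = x then (1 : ZMod 2) else 0) + (if w = y then 1 else 0) := by
  funext w
  simp only [Multigraph.inc, h]
  have hdiag : Sym2.mk x y ≠ Sym2.mk w w := by
    intro hc
    rw [Sym2.eq_iff] at hc
    rcases hc with ⟨hx, hy⟩ | ⟨hx, hy⟩ <;> exact hxy (hx.trans hy.symm)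
  rw [if_neg hdiag]
  by_cases hwx : w = x
  · subst hwx
    rw [if_pos (Sym2.mem_iff.mpr (Or.inl rfl)), if_pos rfl, if_neg hxy, add_zero]
  · by_cases hwy : w = y
    · subst hwy
      rw [if_pos (Sym2.mem_iff.mpr (Or.inr rfl)), if_neg hwx, zero_add, if_pos rfl]
    · rw [if_neg, if_neg hwx, if_neg hwy, add_zero]
      rw [Sym2.mem_iff]
      rintro (h1 | h1) <;> [exact hwx h1; exact hwy h1]

end IncLemmas

/-- If `M = M(G)` and `G` has a loop `e`, then for `|T| = 2` the
splitting matroid `M_T` either is graphic or has a loop: if `e ∉ T` then `e`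
remains a loop of `M_T`; if `e ∈ T` then `M_T` is graphic. -/
theorem splitting_with_loop {V E : Type} (G : Multigraph V E) (M MT : Matroid E)
    (e : E) (T : Set E)
    (hM : IsCycleMatroidOf G M) (hloop : (G.ends e).IsDiag)
    (hT : T.ncard = 2) (hsplit : IsSplitting M T MT) :
    (IsGraphic MT ∨ ∃ f, isLoop MT f) ∧
      (e ∉ T → isLoop MT e) ∧ (e ∈ T → IsGraphic MT) := by
  classical
  obtain ⟨η, A, hA, hAT⟩ := hsplit
  have hME : M.E = Set.univ := hM.1
  have hMTE : MT.E = M.E := hAT.1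
  have hince : G.inc e = 0 := inc_loop G hloop
  have hMe : ¬ M.Indep {e} := by
    rw [hM.2 {e} (Set.subset_univ _), linearIndependent_unique_iff, not_not]
    show G.inc e = 0
    exact hince
  have hAe : A e = 0 := by
    have h1 : ¬ LinearIndependent (ZMod 2) (fun i : ({e} : Set E) => A i.1) := by
      rw [← hA.2 {e} (by rw [hME]; exact Set.subset_univ _)]; exact hMe
    rw [linearIndependent_unique_iff, not_not] at h1
    exact h1
  have hloopMT : e ∉ T → isLoop MT e := by
    intro heT
    refine ⟨by rw [hMTE, hME]; exact Set.subset_univ _, ?_, ?_⟩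
    · rw [hAT.2 {e} (by rw [hME]; exact Set.subset_univ _),
        linearIndependent_unique_iff, not_not]
      show splitCols A T e = 0
      funext o
      cases o with
      | none => simp [splitCols, heT]
      | some x => show A e x = 0; rw [hAe]; rfl
    · intro D hD
      rw [Set.ssubset_singleton_iff.mp hD]
      exact MT.empty_indep
  have hgraphic : e ∈ T → IsGraphic MT := by
    intro heT
    obtain ⟨a, b, hab, hTab⟩ := Set.ncard_eq_two.mp hT
    obtain ⟨f, hef, hTef⟩ : ∃ f, e ≠ f ∧ T = {e, f} := by
      subst hTab
      rcases heT with he | he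
      · exact ⟨b, by rw [he]; exact hab, by rw [he]⟩
      · rw [Set.mem_singleton_iff] at he
        exact ⟨a, by rw [he]; exact hab.symm, by rw [he, Set.pair_comm]⟩
    subst hTef
    obtain ⟨u, v, hf⟩ : ∃ u v, G.ends f = Sym2.mk u v := by
      induction G.ends f using Sym2.ind with
      | _ x y => exact ⟨x, y, rfl⟩
    have hMT : ∀ I : Set E, MT.Indep I ↔
        (LinearIndependent (ZMod 2) fun i : I => splitCols G.inc {e, f} i.1) := by
      intro I
      have hIsub : I ⊆ M.E := by rw [hME]; exact Set.subset_univ _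
      rw [hAT.2 I hIsub]
      by_cases heI : e ∈ I
      · rw [key_mem A hef hAe heI, key_mem G.inc hef hince heI,
          ← hA.2 _ (by rw [hME]; exact Set.subset_univ _),
          ← hM.2 _ (Set.subset_univ _)]
      · rw [key_not_mem A hef heI, key_not_mem G.inc hef heI,
          ← hA.2 _ (by rw [hME]; exact Set.subset_univ _),
          ← hM.2 _ (Set.subset_univ _)]
    refine ⟨Option V, fun g => rowOp u (splitCols G.inc {e, f} g), ⟨rfl, ?_⟩, ?_⟩
    · intro I hI
      rw [hMT I]
      exact (LinearMap.linearIndependent_iff (rowOp u) (rowOp_ker u)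
        (v := fun i : I => splitCols G.inc {e, f} i.1)).symm
    · intro g _
      beta_reduce
      by_cases hge : g = e
      · refine Or.inr ⟨none, some u, fun h => Option.some_ne_none _ h.symm, ?_⟩
        funext o
        rw [rowOp_apply]
        have h1 : splitCols G.inc {e, f} g none = 1 := by
          simp [splitCols, hge]
        have h2 : ∀ z, splitCols G.inc {e, f} g (some z) = 0 := by
          intro z
          show G.inc g z = 0
          rw [hge, hince]; rfl
        cases o with
        | none => rw [h1]; simp
        | some z =>
          rw [h2 z, h1, zero_add]
          by_cases hz : z = u <;> simp [hz]
      · by_cases hgf : g = f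
        · by_cases huv : u = v
          · have hincf : G.inc g = 0 := by
              rw [hgf]
              exact inc_loop G (by rw [hf, huv]; exact Sym2.mk_isDiag_iff.mpr rfl)
            refine Or.inr ⟨none, some u, fun h => Option.some_ne_none _ h.symm, ?_⟩
            funext o
            rw [rowOp_apply]
            have h1 : splitCols G.inc {e, f} g none = 1 := by
              simp [splitCols, hgf]
            have h2 : ∀ z, splitCols G.inc {e, f} g (some z) = 0 := by
              intro z
              show G.inc g z = 0
              rw [hincf]; rfl
            cases o with
            | none => rw [h1]; simp
            | some z =>
              rw [h2 z, h1, zero_add]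
              by_cases hz : z = u <;> simp [hz]
          · have hincf : G.inc g
                = fun w => (if w = u then (1 : ZMod 2) else 0) + (if w = v then 1 else 0) := by
              rw [hgf]
              exact inc_nonloop G hf huv
            refine Or.inr ⟨none, some v, fun h => Option.some_ne_none _ h.symm, ?_⟩
            funext o
            rw [rowOp_apply]
            have h1 : splitCols G.inc {e, f} g none = 1 := by
              simp [splitCols, hgf]
            cases o with
            | none => rw [h1]; simp
            | some z =>
              have h2 : splitCols G.inc {e, f} g (some z)
                  = (if z = u then (1 : ZMod 2) else 0) + (if z = v then 1 else 0) := by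
                show G.inc g z = _
                rw [hincf]
              rw [h2, h1]
              by_cases hz : z = u
              · subst hz
                simp [huv, Ne.symm huv, zmod2_add_self, add_comm]
              · have hvu : ¬v = u := fun h => huv h.symm
                by_cases hzv : z = v <;> simp [hz, hzv, hvu]
        · have hgT : g ∉ ({e, f} : Set E) := by
            intro hmem
            rcases hmem with h' | h'
            · exact hge h'
            · exact hgf (Set.mem_singleton_iff.mp h')
          have h1 : splitCols G.inc {e, f} g none = 0 := by
            simp [splitCols, hgT]
          obtain ⟨x, y, hg⟩ : ∃ x y, G.ends g = Sym2.mk x y := by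
            induction G.ends g using Sym2.ind with
            | _ x y => exact ⟨x, y, rfl⟩
          by_cases hxy : x = y
          · have hincg : G.inc g = 0 :=
              inc_loop G (by rw [hg, hxy]; exact Sym2.mk_isDiag_iff.mpr rfl)
            refine Or.inl ?_
            funext o
            rw [rowOp_apply, h1]
            cases o with
            | none => rw [h1]; simp
            | some z =>
              have h2 : splitCols G.inc {e, f} g (some z) = 0 := by
                show G.inc g z = 0
                rw [hincg]; rfl
              rw [h2]; simp
          · have hincg := inc_nonloop G hg hxy
            refine Or.inr ⟨some x, some y, by simp [hxy], ?_⟩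
            funext o
            rw [rowOp_apply, h1]
            cases o with
            | none => rw [h1]; simp
            | some z =>
              have h2 : splitCols G.inc {e, f} g (some z)
                  = (if z = x then (1 : ZMod 2) else 0) + (if z = y then 1 else 0) := by
                show G.inc g z = _
                rw [hincg]
              rw [h2]
              by_cases hzx : z = x <;> by_cases hzy : z = y <;>
                simp [hzx, hzy, hxy]
  refine ⟨?_, hloopMT, hgraphic⟩
  by_cases h : e ∈ T
  · exact Or.inl (hgraphic h)
  · exact Or.inr ⟨e, hloopMT h⟩

end PaperSplit
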